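/- If A = U Σ Vᵀ is a (thin) singular value decomposition of A with all singular values strictly positive, then the matrix U Vᵀ is a subgradient of the nuclear norm at A; that is, for all matrices B of the same size, ‖B‖_* ≥ ‖A‖_* + ⟨U Vᵀ, B − A⟩, where ⟨X, Y⟩ = trace(XᵀY). -/

import Mathlib

open Matrix

/-- The nuclear norm of a real matrix: the sum of its singular values,
i.e. the sum of the square roots of the eigenvalues of `Aᴴ * A`. -/
noncomputable def nuclearNorm {m n : Type*} [Fintype m] [Fintype n] [DecidableEq n]
    (A : Matrix m n ℝ) : ℝ :=
  ∑ i, Real.sqrt ((Matrix.isHermitian_conjTranspose_mul_self A).eigenvalues i)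

private lemma dot_self_nonneg' {k : ℕ} (x : Fin k → ℝ) : 0 ≤ x ⬝ᵥ x :=
  Finset.sum_nonneg fun i _ => mul_self_nonneg _

/-- Cauchy–Schwarz for the dot product. -/
private lemma dot_cs {k : ℕ} (x y : Fin k → ℝ) :
    x ⬝ᵥ y ≤ Real.sqrt (x ⬝ᵥ x) * Real.sqrt (y ⬝ᵥ y) := by
  calc x ⬝ᵥ y ≤ |x ⬝ᵥ y| := le_abs_self _
    _ = Real.sqrt ((x ⬝ᵥ y) ^ 2) := (Real.sqrt_sq_eq_abs _).symm
    _ ≤ Real.sqrt ((x ⬝ᵥ x) * (y ⬝ᵥ y)) := by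
        apply Real.sqrt_le_sqrt
        have h := Finset.sum_mul_sq_le_sq_mul_sq Finset.univ x y
        simpa [dotProduct, sq] using h
    _ = _ := Real.sqrt_mul (dot_self_nonneg' x) _

private lemma dot_mulVec_left {a b : ℕ} (M : Matrix (Fin a) (Fin b) ℝ)
    (v : Fin b → ℝ) (w : Fin a → ℝ) :
    v ⬝ᵥ (Mᵀ *ᵥ w) = (M *ᵥ v) ⬝ᵥ w := by
  rw [dotProduct_mulVec, vecMul_transpose]

private lemma dot_mulVec_right {a b : ℕ} (M : Matrix (Fin a) (Fin b) ℝ)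
    (v : Fin a → ℝ) (w : Fin b → ℝ) :
    v ⬝ᵥ (M *ᵥ w) = (Mᵀ *ᵥ v) ⬝ᵥ w := by
  rw [dotProduct_mulVec, ← mulVec_transpose]

/-- Squared norm of `M *ᵥ v` as a quadratic form in `v`. -/
private lemma mulVec_dot_mulVec {a b : ℕ} (M : Matrix (Fin a) (Fin b) ℝ) (v : Fin b → ℝ) :
    (M *ᵥ v) ⬝ᵥ (M *ᵥ v) = v ⬝ᵥ ((Mᵀ * M) *ᵥ v) := by
  rw [← mulVec_mulVec, dot_mulVec_left]

/-- Diagonal entry of `Pᵀ * M * Q` as a dot product of columns. -/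
private lemma diag_entry {a b c d : ℕ} (P : Matrix (Fin a) (Fin b) ℝ)
    (M : Matrix (Fin a) (Fin d) ℝ) (Q : Matrix (Fin d) (Fin c) ℝ) (i : Fin b) (j : Fin c) :
    (Pᵀ * M * Q) i j = (fun s => P s i) ⬝ᵥ (M *ᵥ fun s => Q s j) := by
  simp only [Matrix.mul_apply, Matrix.transpose_apply, dotProduct, Matrix.mulVec,
    Finset.sum_mul, Finset.mul_sum]
  rw [Finset.sum_comm]
  exact Finset.sum_congr rfl fun s _ => Finset.sum_congr rfl fun t _ => by ring

/-- Key duality lemma: if `X` is a contraction then `⟨X, B⟩ ≤ ‖B‖_*`. -/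
private lemma trace_le_nuclearNorm {m n : ℕ} (B X : Matrix (Fin m) (Fin n) ℝ)
    (hX : ∀ v : Fin n → ℝ, (X *ᵥ v) ⬝ᵥ (X *ᵥ v) ≤ v ⬝ᵥ v) :
    Matrix.trace (Xᵀ * B) ≤ nuclearNorm B := by
  have hH := Matrix.isHermitian_conjTranspose_mul_self B
  set W : Matrix (Fin n) (Fin n) ℝ := (hH.eigenvectorUnitary : Matrix (Fin n) (Fin n) ℝ)
    with hWdef
  have hWmem := hH.eigenvectorUnitary.2
  rw [Unitary.mem_iff] at hWmem
  have hW1 : Wᵀ * W = 1 := by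
    have h := hWmem.1
    rw [Matrix.star_eq_conjTranspose] at h
    rwa [← Matrix.conjTranspose_eq_transpose_of_trivial]
  have hW2 : W * Wᵀ = 1 := by
    have h := hWmem.2
    rw [Matrix.star_eq_conjTranspose] at h
    rwa [← Matrix.conjTranspose_eq_transpose_of_trivial]
  set w : Fin n → Fin n → ℝ := fun j s => W s j with hwdef
  have hw_unit : ∀ j, (w j) ⬝ᵥ (w j) = 1 := by
    intro j
    have h := congrArg (fun M : Matrix (Fin n) (Fin n) ℝ => M j j) hW1
    simpa [Matrix.mul_apply, Matrix.transpose_apply, Matrix.one_apply, dotProduct,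
      hwdef] using h
  have hBw : ∀ j, (B *ᵥ w j) ⬝ᵥ (B *ᵥ w j) = hH.eigenvalues j := by
    intro j
    rw [mulVec_dot_mulVec]
    have hmv : (Bᵀ * B) *ᵥ (w j) = hH.eigenvalues j • (w j) := by
      have hbj : w j = ⇑(hH.eigenvectorBasis j) := by
        funext s
        exact hH.eigenvectorUnitary_apply s j
      rw [hbj]; exact hH.mulVec_eigenvectorBasis j
    rw [hmv, dotProduct_smul, smul_eq_mul, hw_unit, mul_one]
  have htr : Matrix.trace (Xᵀ * B) = ∑ j, (X *ᵥ w j) ⬝ᵥ (B *ᵥ w j) := by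
    have h1 : Matrix.trace (Wᵀ * (Xᵀ * B) * W) = Matrix.trace (Xᵀ * B) := by
      rw [Matrix.trace_mul_comm, ← Matrix.mul_assoc, hW2, Matrix.one_mul]
    rw [← h1, Matrix.trace]
    apply Finset.sum_congr rfl
    intro j _
    show (Wᵀ * (Xᵀ * B) * W) j j = _
    rw [diag_entry W (Xᵀ * B) W j j, ← mulVec_mulVec, dot_mulVec_left]
  rw [htr]
  have hnNB : nuclearNorm B = ∑ j, Real.sqrt (hH.eigenvalues j) := rfl
  rw [hnNB]
  apply Finset.sum_le_sum
  intro j _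
  calc (X *ᵥ w j) ⬝ᵥ (B *ᵥ w j)
      ≤ Real.sqrt ((X *ᵥ w j) ⬝ᵥ (X *ᵥ w j)) * Real.sqrt ((B *ᵥ w j) ⬝ᵥ (B *ᵥ w j)) :=
        dot_cs _ _
    _ ≤ Real.sqrt ((w j) ⬝ᵥ (w j)) * Real.sqrt (hH.eigenvalues j) := by
        rw [hBw]
        exact mul_le_mul_of_nonneg_right (Real.sqrt_le_sqrt (hX (w j))) (Real.sqrt_nonneg _)
    _ = Real.sqrt (hH.eigenvalues j) := by rw [hw_unit, Real.sqrt_one, one_mul]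

/-- Attainment: there is a contraction `X` with `⟨X, B⟩ = ‖B‖_*`. -/
private lemma exists_dual {m n : ℕ} (B : Matrix (Fin m) (Fin n) ℝ) :
    ∃ X : Matrix (Fin m) (Fin n) ℝ,
      (∀ v : Fin n → ℝ, (X *ᵥ v) ⬝ᵥ (X *ᵥ v) ≤ v ⬝ᵥ v) ∧
      Matrix.trace (Xᵀ * B) = nuclearNorm B := by
  have hH := Matrix.isHermitian_conjTranspose_mul_self B
  set W : Matrix (Fin n) (Fin n) ℝ := (hH.eigenvectorUnitary : Matrix (Fin n) (Fin n) ℝ)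
    with hWdef
  have hWmem := hH.eigenvectorUnitary.2
  rw [Unitary.mem_iff] at hWmem
  have hW1 : Wᵀ * W = 1 := by
    have h := hWmem.1
    rw [Matrix.star_eq_conjTranspose] at h
    rwa [← Matrix.conjTranspose_eq_transpose_of_trivial]
  have hW2 : W * Wᵀ = 1 := by
    have h := hWmem.2
    rw [Matrix.star_eq_conjTranspose] at h
    rwa [← Matrix.conjTranspose_eq_transpose_of_trivial]
  set lam : Fin n → ℝ := hH.eigenvalues with hlamdef
  have hspec : Bᵀ * B = W * Matrix.diagonal lam * Wᵀ := by
    have h := hH.spectral_theorem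
    rw [← Matrix.conjTranspose_eq_transpose_of_trivial W]
    rw [Unitary.conjStarAlgAut_apply, Matrix.star_eq_conjTranspose] at h
    simp [RCLike.ofReal_real_eq_id, Function.id_comp] at h
    exact h
  have hnn : ∀ j, 0 ≤ lam j := by
    have hps : (Bᵀ * B).PosSemidef := by
      rw [← Matrix.conjTranspose_eq_transpose_of_trivial]
      exact Matrix.posSemidef_conjTranspose_mul_self B
    exact fun j => hps.eigenvalues_nonneg j
  set c : Fin n → ℝ := fun j => (Real.sqrt (lam j))⁻¹ with hcdef
  have hkey : ∀ j, c j * lam j = Real.sqrt (lam j) := by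
    intro j
    rcases eq_or_lt_of_le (hnn j) with h | h
    · simp [hcdef, ← h]
    · have hs : Real.sqrt (lam j) ≠ 0 := ne_of_gt (Real.sqrt_pos.mpr h)
      rw [hcdef]
      have hmm : lam j = Real.sqrt (lam j) * Real.sqrt (lam j) :=
        (Real.mul_self_sqrt (hnn j)).symm
      rw [inv_mul_eq_div, div_eq_iff hs]
      exact hmm
  have hWW : ∀ t : Matrix (Fin n) (Fin n) ℝ, Wᵀ * (W * t) = t := by
    intro t; rw [← Matrix.mul_assoc, hW1, Matrix.one_mul]
  have hBB : ∀ t : Matrix (Fin n) (Fin n) ℝ,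
      Bᵀ * (B * t) = W * (Matrix.diagonal lam * (Wᵀ * t)) := by
    intro t
    rw [← Matrix.mul_assoc, hspec]
    simp only [Matrix.mul_assoc]
  set X := B * W * Matrix.diagonal c * Wᵀ with hXdef
  have hXT : Xᵀ = W * (Matrix.diagonal c * (Wᵀ * Bᵀ)) := by
    rw [hXdef]
    simp only [Matrix.transpose_mul, Matrix.transpose_transpose, Matrix.diagonal_transpose,
      Matrix.mul_assoc]
  refine ⟨X, ?_, ?_⟩
  · intro v
    have hXtX : Xᵀ * X = W * (Matrix.diagonal (fun i => c i * (lam i * c i)) * Wᵀ) := by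
      calc Xᵀ * X
          = W * (Matrix.diagonal c * (Wᵀ * (Bᵀ * (B * (W * (Matrix.diagonal c * Wᵀ)))))) := by
            rw [hXT, hXdef]; simp only [Matrix.mul_assoc]
        _ = W * (Matrix.diagonal c * (Wᵀ * (W * (Matrix.diagonal lam *
              (Wᵀ * (W * (Matrix.diagonal c * Wᵀ))))))) := by rw [hBB]
        _ = W * (Matrix.diagonal c * (Matrix.diagonal lam * (Matrix.diagonal c * Wᵀ))) := by
            rw [hWW, hWW]
        _ = W * (Matrix.diagonal c * (Matrix.diagonal (fun i => lam i * c i) * Wᵀ)) := by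
            rw [← Matrix.mul_assoc (Matrix.diagonal lam) (Matrix.diagonal c) Wᵀ,
              Matrix.diagonal_mul_diagonal]
        _ = W * (Matrix.diagonal (fun i => c i * (lam i * c i)) * Wᵀ) := by
            rw [← Matrix.mul_assoc (Matrix.diagonal c) (Matrix.diagonal (fun i => lam i * c i)) Wᵀ,
              Matrix.diagonal_mul_diagonal]
    have h1 : (X *ᵥ v) ⬝ᵥ (X *ᵥ v) =
        (Wᵀ *ᵥ v) ⬝ᵥ (Matrix.diagonal (fun i => c i * (lam i * c i)) *ᵥ (Wᵀ *ᵥ v)) := by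
      rw [mulVec_dot_mulVec, hXtX, ← Matrix.mulVec_mulVec, ← Matrix.mulVec_mulVec,
        dot_mulVec_right]
    have h2 : (Wᵀ *ᵥ v) ⬝ᵥ (Wᵀ *ᵥ v) = v ⬝ᵥ v := by
      rw [mulVec_dot_mulVec, Matrix.transpose_transpose, hW2, Matrix.one_mulVec]
    rw [h1, ← h2]
    have hd : ∀ j, c j * (lam j * c j) ≤ 1 := by
      intro j
      have he : c j * (lam j * c j) = (c j * lam j) * c j := by ring
      rw [he, hkey]
      rcases eq_or_lt_of_le (hnn j) with h | h
      · rw [hcdef]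
        simp [← h]
      · rw [hcdef, mul_inv_cancel₀ (ne_of_gt (Real.sqrt_pos.mpr h))]
    simp only [dotProduct, Matrix.mulVec_diagonal]
    apply Finset.sum_le_sum
    intro j _
    set u := Wᵀ *ᵥ v
    calc u j * (c j * (lam j * c j) * u j)
        = (c j * (lam j * c j)) * (u j * u j) := by ring
      _ ≤ 1 * (u j * u j) := mul_le_mul_of_nonneg_right (hd j) (mul_self_nonneg _)
      _ = u j * u j := one_mul _
  · have hXB : Xᵀ * B = W * (Matrix.diagonal (fun i => c i * lam i) * Wᵀ) := by
      calc Xᵀ * B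
          = W * (Matrix.diagonal c * (Wᵀ * (Bᵀ * B))) := by
            rw [hXT]; simp only [Matrix.mul_assoc]
        _ = W * (Matrix.diagonal c * (Wᵀ * (W * (Matrix.diagonal lam * Wᵀ)))) := by
            rw [hspec]; simp only [Matrix.mul_assoc]
        _ = W * (Matrix.diagonal c * (Matrix.diagonal lam * Wᵀ)) := by rw [hWW]
        _ = W * (Matrix.diagonal (fun i => c i * lam i) * Wᵀ) := by
            rw [← Matrix.mul_assoc (Matrix.diagonal c) (Matrix.diagonal lam) Wᵀ,
              Matrix.diagonal_mul_diagonal]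
    rw [hXB]
    have htr : Matrix.trace (W * (Matrix.diagonal (fun i => c i * lam i) * Wᵀ)) =
        Matrix.trace (Matrix.diagonal (fun i => c i * lam i)) := by
      rw [Matrix.trace_mul_comm, Matrix.mul_assoc, hW1, Matrix.mul_one]
    rw [htr, Matrix.trace_diagonal]
    have hnNB : nuclearNorm B = ∑ j, Real.sqrt (lam j) := rfl
    rw [hnNB]
    exact Finset.sum_congr rfl fun j _ => hkey j

theorem uvT_subgradient_nuclearNorm {m n r : ℕ}
    (A : Matrix (Fin m) (Fin n) ℝ)
    (U : Matrix (Fin m) (Fin r) ℝ) (V : Matrix (Fin n) (Fin r) ℝ)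
    (σ : Fin r → ℝ)
    (hU : Uᵀ * U = 1) (hV : Vᵀ * V = 1)
    (hσ : ∀ i, 0 < σ i)
    (hA : A = U * Matrix.diagonal σ * Vᵀ) :
    ∀ B : Matrix (Fin m) (Fin n) ℝ,
      nuclearNorm B ≥ nuclearNorm A + Matrix.trace ((U * Vᵀ)ᵀ * (B - A)) := by
  intro B
  -- column facts
  have hVcol : ∀ j, (fun s => V s j) ⬝ᵥ (fun s => V s j) = 1 := by
    intro j
    have h := congrArg (fun M : Matrix (Fin r) (Fin r) ℝ => M j j) hV
    simpa [Matrix.mul_apply, Matrix.transpose_apply, Matrix.one_apply, dotProduct] using h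
  have hUcol : ∀ j, (fun s => U s j) ⬝ᵥ (fun s => U s j) = 1 := by
    intro j
    have h := congrArg (fun M : Matrix (Fin r) (Fin r) ℝ => M j j) hU
    simpa [Matrix.mul_apply, Matrix.transpose_apply, Matrix.one_apply, dotProduct] using h
  -- U * Vᵀ is a contraction
  have hcontr : ∀ v : Fin n → ℝ, ((U * Vᵀ) *ᵥ v) ⬝ᵥ ((U * Vᵀ) *ᵥ v) ≤ v ⬝ᵥ v := by
    intro v
    have h1 : ((U * Vᵀ) *ᵥ v) ⬝ᵥ ((U * Vᵀ) *ᵥ v) = (Vᵀ *ᵥ v) ⬝ᵥ (Vᵀ *ᵥ v) := by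
      rw [mulVec_dot_mulVec, Matrix.transpose_mul, Matrix.transpose_transpose]
      rw [show V * Uᵀ * (U * Vᵀ) = V * (Uᵀ * U * Vᵀ) by simp only [Matrix.mul_assoc],
        hU, Matrix.one_mul, ← Matrix.mulVec_mulVec, dot_mulVec_right]
    rw [h1]
    -- projection inequality
    set w := Vᵀ *ᵥ v with hwdef
    set p := V *ᵥ w with hpdef
    have hpp : p ⬝ᵥ p = w ⬝ᵥ w := by
      rw [hpdef, mulVec_dot_mulVec, hV, Matrix.one_mulVec]
    have hvp : v ⬝ᵥ p = w ⬝ᵥ w := by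
      rw [hpdef, dot_mulVec_right, ← hwdef]
    have h0 : 0 ≤ (v - p) ⬝ᵥ (v - p) := dot_self_nonneg' _
    have hexp : (v - p) ⬝ᵥ (v - p) = v ⬝ᵥ v - w ⬝ᵥ w := by
      rw [sub_dotProduct, dotProduct_sub, dotProduct_sub, dotProduct_comm p v, hvp, hpp]
      ring
    linarith [hexp ▸ h0]
  -- ⟨UVᵀ, A⟩ = ∑ σ
  have htrA : Matrix.trace ((U * Vᵀ)ᵀ * A) = ∑ j, σ j := by
    rw [hA, Matrix.transpose_mul, Matrix.transpose_transpose]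
    rw [show V * Uᵀ * (U * Matrix.diagonal σ * Vᵀ) = V * (Matrix.diagonal σ * Vᵀ) by
      simp only [Matrix.mul_assoc]; rw [← Matrix.mul_assoc Uᵀ U, hU, Matrix.one_mul]]
    rw [Matrix.trace_mul_comm, Matrix.mul_assoc, hV, Matrix.mul_one, Matrix.trace_diagonal]
  -- ‖A‖_* ≤ ∑ σ
  obtain ⟨X, hXc, hXeq⟩ := exists_dual A
  have hup : nuclearNorm A ≤ ∑ j, σ j := by
    rw [← hXeq]
    have h : Matrix.trace (Xᵀ * A) = ∑ j, (Vᵀ * Xᵀ * U) j j * σ j := by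
      rw [hA]
      rw [show Xᵀ * (U * Matrix.diagonal σ * Vᵀ) = Xᵀ * U * Matrix.diagonal σ * Vᵀ by
        simp only [Matrix.mul_assoc]]
      rw [Matrix.trace_mul_comm]
      rw [show Vᵀ * (Xᵀ * U * Matrix.diagonal σ) = (Vᵀ * Xᵀ * U) * Matrix.diagonal σ by
        simp only [Matrix.mul_assoc]]
      simp [Matrix.trace, Matrix.diag, Matrix.mul_diagonal]
    rw [h]
    apply Finset.sum_le_sum
    intro j _
    have hdj : (Vᵀ * Xᵀ * U) j j ≤ 1 := by
      rw [diag_entry V Xᵀ U j j, dot_mulVec_left]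
      calc (X *ᵥ fun s => V s j) ⬝ᵥ (fun s => U s j)
          ≤ Real.sqrt ((X *ᵥ fun s => V s j) ⬝ᵥ (X *ᵥ fun s => V s j)) *
            Real.sqrt ((fun s => U s j) ⬝ᵥ (fun s => U s j)) := dot_cs _ _
        _ ≤ Real.sqrt ((fun s => V s j) ⬝ᵥ (fun s => V s j)) * Real.sqrt 1 := by
            rw [hUcol]
            exact mul_le_mul_of_nonneg_right (Real.sqrt_le_sqrt (hXc _)) (Real.sqrt_nonneg _)
        _ = 1 := by rw [hVcol, Real.sqrt_one, one_mul]
    calc (Vᵀ * Xᵀ * U) j j * σ j ≤ 1 * σ j :=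
          mul_le_mul_of_nonneg_right hdj (le_of_lt (hσ j))
      _ = σ j := one_mul _
  -- assemble
  have hK := trace_le_nuclearNorm B (U * Vᵀ) hcontr
  have hsplit : Matrix.trace ((U * Vᵀ)ᵀ * (B - A)) =
      Matrix.trace ((U * Vᵀ)ᵀ * B) - Matrix.trace ((U * Vᵀ)ᵀ * A) := by
    rw [Matrix.mul_sub, Matrix.trace_sub]
  rw [ge_iff_le, hsplit, htrA]
  linarith
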